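/- Let φ be an LTL formula and FG ψ a basis formula in B_FG(φ). For every C ⊆ ⇓ψ: (1) eval(ψ,C) ∈ Π₁, hence FG(eval(ψ,C)) ∈ Δ₂; (2) FG ψ and FG(eval(ψ,C)) are equivalent under context ⟨C,⇓ψ⟩; (3) if C ⊆ C' ⊆ ⇓ψ then FG(eval(ψ,C)) ⊨ FG(eval(ψ,C')). -/
import Mathlib


namespace LTLNorm

/-- LTL formulas in negation normal form. -/
inductive F (Ap : Type) : Type
  | tt    : F Ap
  | ff    : F Ap
  | pos   : Ap → F Ap
  | nlit  : Ap → F Ap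
  | and   : F Ap → F Ap → F Ap
  | or    : F Ap → F Ap → F Ap
  | next  : F Ap → F Ap
  | untl  : F Ap → F Ap → F Ap
  | wuntl : F Ap → F Ap → F Ap
  | rel   : F Ap → F Ap → F Ap
  | srel  : F Ap → F Ap → F Ap
  deriving DecidableEq

/-- Infinite words over the alphabet `2^Ap`. -/
abbrev Word (Ap : Type) := ℕ → Set Ap

/-- Suffix of a word starting at position `i`. -/
def suff {Ap : Type} (w : Word Ap) (i : ℕ) : Word Ap := fun n => w (n + i)

/-- Satisfaction relation. -/
def Sat {Ap : Type} : Word Ap → F Ap → Prop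
  | _, F.tt => True
  | _, F.ff => False
  | w, F.pos a => a ∈ w 0
  | w, F.nlit a => a ∉ w 0
  | w, F.and φ ψ => Sat w φ ∧ Sat w ψ
  | w, F.or φ ψ => Sat w φ ∨ Sat w ψ
  | w, F.next φ => Sat (suff w 1) φ
  | w, F.untl φ ψ => ∃ k, Sat (suff w k) ψ ∧ ∀ j < k, Sat (suff w j) φ
  | w, F.wuntl φ ψ => (∀ k, Sat (suff w k) φ) ∨ ∃ k, Sat (suff w k) ψ ∧ ∀ j < k, Sat (suff w j) φ
  | w, F.srel φ ψ => ∃ k, Sat (suff w k) φ ∧ ∀ j ≤ k, Sat (suff w j) ψ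
  | w, F.rel φ ψ => (∀ k, Sat (suff w k) ψ) ∨ ∃ k, Sat (suff w k) φ ∧ ∀ j ≤ k, Sat (suff w j) ψ

/-- Equivalence of formulas. -/
def Equiv {Ap : Type} (φ ψ : F Ap) : Prop := ∀ w : Word Ap, Sat w φ ↔ Sat w ψ

/-- Entailment: every word satisfying `φ` satisfies `ψ`. -/
def Entails {Ap : Type} (φ ψ : F Ap) : Prop := ∀ w : Word Ap, Sat w φ → Sat w ψ

/-- F φ := tt U φ -/
def Ff {Ap : Type} (φ : F Ap) : F Ap := F.untl F.tt φ
/-- G φ := φ W ff -/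
def Gf {Ap : Type} (φ : F Ap) : F Ap := F.wuntl φ F.ff
/-- GF φ := G (F φ) -/
def GFf {Ap : Type} (φ : F Ap) : F Ap := Gf (Ff φ)
/-- FG φ := F (G φ) -/
def FGf {Ap : Type} (φ : F Ap) : F Ap := Ff (Gf φ)

/-- Number of nodes of the syntax tree. -/
def size {Ap : Type} : F Ap → ℕ
  | F.tt => 1
  | F.ff => 1
  | F.pos _ => 1
  | F.nlit _ => 1
  | F.and φ ψ => size φ + size ψ + 1
  | F.or φ ψ => size φ + size ψ + 1
  | F.next φ => size φ + 1
  | F.untl φ ψ => size φ + size ψ + 1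
  | F.wuntl φ ψ => size φ + size ψ + 1
  | F.rel φ ψ => size φ + size ψ + 1
  | F.srel φ ψ => size φ + size ψ + 1

/-- The dual of a formula in negation normal form. -/
def dual {Ap : Type} : F Ap → F Ap
  | F.tt => F.ff
  | F.ff => F.tt
  | F.pos a => F.nlit a
  | F.nlit a => F.pos a
  | F.and φ ψ => F.or (dual φ) (dual ψ)
  | F.or φ ψ => F.and (dual φ) (dual ψ)
  | F.next φ => F.next (dual φ)
  | F.untl φ ψ => F.rel (dual φ) (dual ψ)
  | F.rel φ ψ => F.untl (dual φ) (dual ψ)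
  | F.wuntl φ ψ => F.srel (dual φ) (dual ψ)
  | F.srel φ ψ => F.wuntl (dual φ) (dual ψ)

mutual
/-- The class Σ_i of the syntactic future hierarchy. -/
inductive SigmaC (Ap : Type) : ℕ → F Ap → Prop where
  | tt (i : ℕ) : SigmaC Ap i F.tt
  | ff (i : ℕ) : SigmaC Ap i F.ff
  | pos (i : ℕ) (a : Ap) : SigmaC Ap i (F.pos a)
  | nlit (i : ℕ) (a : Ap) : SigmaC Ap i (F.nlit a)
  | and {i : ℕ} {φ ψ : F Ap} : SigmaC Ap i φ → SigmaC Ap i ψ → SigmaC Ap i (F.and φ ψ)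
  | or {i : ℕ} {φ ψ : F Ap} : SigmaC Ap i φ → SigmaC Ap i ψ → SigmaC Ap i (F.or φ ψ)
  | ofPi {i : ℕ} {φ : F Ap} : PiC Ap i φ → SigmaC Ap (i + 1) φ
  | next {i : ℕ} {φ : F Ap} : SigmaC Ap (i + 1) φ → SigmaC Ap (i + 1) (F.next φ)
  | untl {i : ℕ} {φ ψ : F Ap} :
      SigmaC Ap (i + 1) φ → SigmaC Ap (i + 1) ψ → SigmaC Ap (i + 1) (F.untl φ ψ)
  | srel {i : ℕ} {φ ψ : F Ap} :
      SigmaC Ap (i + 1) φ → SigmaC Ap (i + 1) ψ → SigmaC Ap (i + 1) (F.srel φ ψ)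

/-- The class Π_i of the syntactic future hierarchy. -/
inductive PiC (Ap : Type) : ℕ → F Ap → Prop where
  | tt (i : ℕ) : PiC Ap i F.tt
  | ff (i : ℕ) : PiC Ap i F.ff
  | pos (i : ℕ) (a : Ap) : PiC Ap i (F.pos a)
  | nlit (i : ℕ) (a : Ap) : PiC Ap i (F.nlit a)
  | and {i : ℕ} {φ ψ : F Ap} : PiC Ap i φ → PiC Ap i ψ → PiC Ap i (F.and φ ψ)
  | or {i : ℕ} {φ ψ : F Ap} : PiC Ap i φ → PiC Ap i ψ → PiC Ap i (F.or φ ψ)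
  | ofSigma {i : ℕ} {φ : F Ap} : SigmaC Ap i φ → PiC Ap (i + 1) φ
  | next {i : ℕ} {φ : F Ap} : PiC Ap (i + 1) φ → PiC Ap (i + 1) (F.next φ)
  | rel {i : ℕ} {φ ψ : F Ap} :
      PiC Ap (i + 1) φ → PiC Ap (i + 1) ψ → PiC Ap (i + 1) (F.rel φ ψ)
  | wuntl {i : ℕ} {φ ψ : F Ap} :
      PiC Ap (i + 1) φ → PiC Ap (i + 1) ψ → PiC Ap (i + 1) (F.wuntl φ ψ)
end

/-- The class Δ_i of the syntactic future hierarchy. -/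
inductive DeltaC (Ap : Type) : ℕ → F Ap → Prop where
  | ofSigma {i : ℕ} {φ : F Ap} : SigmaC Ap i φ → DeltaC Ap i φ
  | ofPi {i : ℕ} {φ : F Ap} : PiC Ap i φ → DeltaC Ap i φ
  | and {i : ℕ} {φ ψ : F Ap} : DeltaC Ap i φ → DeltaC Ap i ψ → DeltaC Ap i (F.and φ ψ)
  | or {i : ℕ} {φ ψ : F Ap} : DeltaC Ap i φ → DeltaC Ap i ψ → DeltaC Ap i (F.or φ ψ)

/-- `LangC B C` is the set of words satisfying every formula of `C` and
no formula of `B \ C` (the language of the context `⟨C,B⟩`). -/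
def LangC {Ap : Type} (B C : Finset (F Ap)) : Set (Word Ap) :=
  {w | (∀ ψ ∈ C, Sat w ψ) ∧ ∀ ψ ∈ B, ψ ∉ C → ¬ Sat w ψ}

/-- Equivalence under the context `⟨C,B⟩`. -/
def EquivUnder {Ap : Type} (B C : Finset (F Ap)) (φ₁ φ₂ : F Ap) : Prop :=
  ∀ w ∈ LangC B C, (Sat w φ₁ ↔ Sat w φ₂)

/-- Disjunction of a list of formulas. -/
def bigOr {Ap : Type} (l : List (F Ap)) : F Ap := l.foldr F.or F.ff

/-- Conjunction of a list of formulas. -/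
def bigAnd {Ap : Type} (l : List (F Ap)) : F Ap := l.foldr F.and F.tt

variable {Ap : Type} [DecidableEq Ap]

/-- The set of subformulas of a formula. -/
def sf : F Ap → Finset (F Ap)
  | F.tt => {F.tt}
  | F.ff => {F.ff}
  | F.pos a => {F.pos a}
  | F.nlit a => {F.nlit a}
  | F.and φ ψ => insert (F.and φ ψ) (sf φ ∪ sf ψ)
  | F.or φ ψ => insert (F.or φ ψ) (sf φ ∪ sf ψ)
  | F.next φ => insert (F.next φ) (sf φ)
  | F.untl φ ψ => insert (F.untl φ ψ) (sf φ ∪ sf ψ)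
  | F.wuntl φ ψ => insert (F.wuntl φ ψ) (sf φ ∪ sf ψ)
  | F.rel φ ψ => insert (F.rel φ ψ) (sf φ ∪ sf ψ)
  | F.srel φ ψ => insert (F.srel φ ψ) (sf φ ∪ sf ψ)

/-- `B_GF(φ) = { GF ψ : χ U ψ or ψ M χ is a subformula of φ }`. -/
def BGF (φ : F Ap) : Finset (F Ap) :=
  (sf φ).biUnion fun σ =>
    match σ with
    | F.untl _ ψ => {GFf ψ}
    | F.srel ψ _ => {GFf ψ}
    | _ => ∅

/-- `B_FG(φ) = { FG ψ : χ W ψ or ψ R χ is a subformula of φ }`. -/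
def BFG (φ : F Ap) : Finset (F Ap) :=
  (sf φ).biUnion fun σ =>
    match σ with
    | F.wuntl _ ψ => {FGf ψ}
    | F.rel ψ _ => {FGf ψ}
    | _ => ∅

/-- The basis `B(φ) = B_GF(φ) ∪ B_FG(φ)`. -/
def Bset (φ : F Ap) : Finset (F Ap) := BGF φ ∪ BFG φ

/-- The argument of a basis formula: `GF ψ ↦ ψ` and `FG ψ ↦ ψ`. -/
def innerArg : F Ap → F Ap
  | F.wuntl (F.untl F.tt ψ) F.ff => ψ      -- GF ψ
  | F.untl F.tt (F.wuntl ψ F.ff) => ψ      -- FG ψ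
  | φ => φ

/-- `⇓ψ`: the basis formulas of `B(φ0)` strictly below `op(ψ)` in the order `≺`,
i.e. those whose argument is a subformula of `ψ`. -/
def down (φ0 ψ : F Ap) : Finset (F Ap) :=
  (Bset φ0).filter fun χ => innerArg χ ∈ sf ψ

/-- The formula `eval(ψ, C)`. -/
def eval (C : Finset (F Ap)) : F Ap → F Ap
  | F.tt => F.tt
  | F.ff => F.ff
  | F.pos a => F.pos a
  | F.nlit a => F.nlit a
  | F.and φ ψ => F.and (eval C φ) (eval C ψ)
  | F.or φ ψ => F.or (eval C φ) (eval C ψ)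
  | F.next φ => F.next (eval C φ)
  | F.wuntl φ ψ => F.wuntl (eval C φ) (eval C ψ)
  | F.rel φ ψ => F.rel (eval C φ) (eval C ψ)
  | F.untl φ ψ => if GFf ψ ∈ C then F.wuntl (eval C φ) (eval C ψ) else F.ff
  | F.srel φ ψ => if GFf φ ∈ C then F.rel (eval C φ) (eval C ψ) else F.ff

/-! ### Auxiliary lemmas -/

lemma suff_suff {Ap : Type} (w : Word Ap) (i k : ℕ) :
    suff (suff w i) k = suff w (k + i) := by
  funext n; simp [suff, Nat.add_assoc]

lemma sat_FG {Ap : Type} (w : Word Ap) (χ : F Ap) :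
    Sat w (FGf χ) ↔ ∃ k, ∀ j, k ≤ j → Sat (suff w j) χ := by
  constructor
  · rintro ⟨k, hk, -⟩
    rcases hk with hall | ⟨m, hff, -⟩
    · refine ⟨k, fun j hj => ?_⟩
      have := hall (j - k)
      rwa [suff_suff, Nat.sub_add_cancel hj] at this
    · exact absurd hff (by simp [Sat])
  · rintro ⟨k, hk⟩
    refine ⟨k, Or.inl fun m => ?_, fun j _ => trivial⟩
    rw [suff_suff]; exact hk (m + k) (Nat.le_add_left _ _)

lemma sat_GF {Ap : Type} (w : Word Ap) (χ : F Ap) :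
    Sat w (GFf χ) ↔ ∀ k, ∃ j, k ≤ j ∧ Sat (suff w j) χ := by
  constructor
  · rintro (hall | ⟨m, hff, -⟩)
    · intro k
      obtain ⟨m, hm, -⟩ := hall k
      rw [suff_suff] at hm
      exact ⟨m + k, Nat.le_add_left _ _, hm⟩
    · exact absurd hff (by simp [Sat])
  · intro h
    refine Or.inl fun k => ?_
    obtain ⟨j, hj, hs⟩ := h k
    refine ⟨j - k, ?_, fun m _ => trivial⟩
    rwa [suff_suff, Nat.sub_add_cancel hj]

lemma mem_sf_self (χ : F Ap) : χ ∈ sf χ := by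
  cases χ <;> simp [sf]

lemma sf_trans {α β γ : F Ap} (h1 : α ∈ sf β) (h2 : β ∈ sf γ) : α ∈ sf γ := by
  induction γ with
  | tt => simp only [sf, Finset.mem_singleton] at h2; subst h2; exact h1
  | ff => simp only [sf, Finset.mem_singleton] at h2; subst h2; exact h1
  | pos a => simp only [sf, Finset.mem_singleton] at h2; subst h2; exact h1
  | nlit a => simp only [sf, Finset.mem_singleton] at h2; subst h2; exact h1
  | and a b iha ihb =>
    simp only [sf, Finset.mem_insert, Finset.mem_union] at h2 ⊢
    rcases h2 with rfl | h2 | h2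
    · simpa only [sf, Finset.mem_insert, Finset.mem_union] using h1
    · exact Or.inr (Or.inl (iha h2))
    · exact Or.inr (Or.inr (ihb h2))
  | or a b iha ihb =>
    simp only [sf, Finset.mem_insert, Finset.mem_union] at h2 ⊢
    rcases h2 with rfl | h2 | h2
    · simpa only [sf, Finset.mem_insert, Finset.mem_union] using h1
    · exact Or.inr (Or.inl (iha h2))
    · exact Or.inr (Or.inr (ihb h2))
  | next a iha =>
    simp only [sf, Finset.mem_insert] at h2 ⊢
    rcases h2 with rfl | h2
    · simpa only [sf, Finset.mem_insert] using h1
    · exact Or.inr (iha h2)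
  | untl a b iha ihb =>
    simp only [sf, Finset.mem_insert, Finset.mem_union] at h2 ⊢
    rcases h2 with rfl | h2 | h2
    · simpa only [sf, Finset.mem_insert, Finset.mem_union] using h1
    · exact Or.inr (Or.inl (iha h2))
    · exact Or.inr (Or.inr (ihb h2))
  | wuntl a b iha ihb =>
    simp only [sf, Finset.mem_insert, Finset.mem_union] at h2 ⊢
    rcases h2 with rfl | h2 | h2
    · simpa only [sf, Finset.mem_insert, Finset.mem_union] using h1
    · exact Or.inr (Or.inl (iha h2))
    · exact Or.inr (Or.inr (ihb h2))
  | rel a b iha ihb =>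
    simp only [sf, Finset.mem_insert, Finset.mem_union] at h2 ⊢
    rcases h2 with rfl | h2 | h2
    · simpa only [sf, Finset.mem_insert, Finset.mem_union] using h1
    · exact Or.inr (Or.inl (iha h2))
    · exact Or.inr (Or.inr (ihb h2))
  | srel a b iha ihb =>
    simp only [sf, Finset.mem_insert, Finset.mem_union] at h2 ⊢
    rcases h2 with rfl | h2 | h2
    · simpa only [sf, Finset.mem_insert, Finset.mem_union] using h1
    · exact Or.inr (Or.inl (iha h2))
    · exact Or.inr (Or.inr (ihb h2))

lemma GFf_inj {x y : F Ap} (h : GFf x = GFf y) : x = y := by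
  simpa [GFf, Gf, Ff] using h

lemma FGf_inj {x y : F Ap} (h : FGf x = FGf y) : x = y := by
  simpa [FGf, Gf, Ff] using h

lemma innerArg_GFf (b : F Ap) : innerArg (GFf b) = b := rfl

lemma mem_sf_of_BFG {φ0 ψ0 : F Ap} (h : FGf ψ0 ∈ BFG φ0) : ψ0 ∈ sf φ0 := by
  rw [BFG, Finset.mem_biUnion] at h
  obtain ⟨σ, hσ, hm⟩ := h
  cases σ <;> simp only [Finset.mem_singleton, Finset.notMem_empty] at hm
  · obtain rfl := FGf_inj hm
    exact sf_trans (by simp [sf, mem_sf_self]) hσ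
  · obtain rfl := FGf_inj hm
    exact sf_trans (by simp [sf, mem_sf_self]) hσ

lemma GFf_mem_down_of_untl {φ0 ψ0 a b : F Ap} (hsψ : ψ0 ∈ sf φ0)
    (h : F.untl a b ∈ sf ψ0) : GFf b ∈ down φ0 ψ0 := by
  rw [down, Finset.mem_filter]
  refine ⟨Finset.mem_union_left _ ?_, ?_⟩
  · rw [BGF, Finset.mem_biUnion]
    exact ⟨F.untl a b, sf_trans h hsψ, by simp⟩
  · rw [innerArg_GFf]
    exact sf_trans (by simp [sf, mem_sf_self]) h

lemma GFf_mem_down_of_srel {φ0 ψ0 a b : F Ap} (hsψ : ψ0 ∈ sf φ0)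
    (h : F.srel a b ∈ sf ψ0) : GFf a ∈ down φ0 ψ0 := by
  rw [down, Finset.mem_filter]
  refine ⟨Finset.mem_union_left _ ?_, ?_⟩
  · rw [BGF, Finset.mem_biUnion]
    exact ⟨F.srel a b, sf_trans h hsψ, by simp⟩
  · rw [innerArg_GFf]
    exact sf_trans (by simp [sf, mem_sf_self]) h

lemma eval_pi1 (C : Finset (F Ap)) : ∀ χ : F Ap, PiC Ap 1 (eval C χ) := by
  intro χ
  induction χ with
  | tt => exact PiC.tt 1
  | ff => exact PiC.ff 1
  | pos a => exact PiC.pos 1 a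
  | nlit a => exact PiC.nlit 1 a
  | and a b iha ihb => exact PiC.and iha ihb
  | or a b iha ihb => exact PiC.or iha ihb
  | next a iha => exact PiC.next iha
  | wuntl a b iha ihb => exact PiC.wuntl iha ihb
  | rel a b iha ihb => exact PiC.rel iha ihb
  | untl a b iha ihb =>
    simp only [eval]
    split_ifs with h
    · exact PiC.wuntl iha ihb
    · exact PiC.ff 1
  | srel a b iha ihb =>
    simp only [eval]
    split_ifs with h
    · exact PiC.rel iha ihb
    · exact PiC.ff 1

lemma FGf_delta2 {χ : F Ap} (h : PiC Ap 1 χ) : DeltaC Ap 2 (FGf χ) := by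
  refine DeltaC.ofSigma ?_
  show SigmaC Ap 2 (F.untl F.tt (F.wuntl χ F.ff))
  exact SigmaC.untl (SigmaC.tt 2) (SigmaC.ofPi (PiC.wuntl h (PiC.ff 1)))

lemma eval_mono {C C' : Finset (F Ap)} (h : C ⊆ C') :
    ∀ χ (w : Word Ap), Sat w (eval C χ) → Sat w (eval C' χ) := by
  intro χ
  induction χ with
  | tt => intro w hw; exact hw
  | ff => intro w hw; exact hw
  | pos a => intro w hw; exact hw
  | nlit a => intro w hw; exact hw
  | and a b iha ihb =>
    intro w hw
    exact ⟨iha _ hw.1, ihb _ hw.2⟩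
  | or a b iha ihb =>
    intro w hw
    exact hw.imp (iha _) (ihb _)
  | next a iha =>
    intro w hw
    exact iha _ hw
  | wuntl a b iha ihb =>
    intro w hw
    rcases hw with hall | ⟨k, h1, h2⟩
    · exact Or.inl fun k => iha _ (hall k)
    · exact Or.inr ⟨k, ihb _ h1, fun j hj => iha _ (h2 j hj)⟩
  | rel a b iha ihb =>
    intro w hw
    rcases hw with hall | ⟨k, h1, h2⟩
    · exact Or.inl fun k => ihb _ (hall k)
    · exact Or.inr ⟨k, iha _ h1, fun j hj => ihb _ (h2 j hj)⟩
  | untl a b iha ihb =>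
    intro w hw
    simp only [eval] at hw ⊢
    by_cases hb : GFf b ∈ C
    · rw [if_pos hb] at hw
      rw [if_pos (h hb)]
      rcases hw with hall | ⟨k, h1, h2⟩
      · exact Or.inl fun k => iha _ (hall k)
      · exact Or.inr ⟨k, ihb _ h1, fun j hj => iha _ (h2 j hj)⟩
    · rw [if_neg hb] at hw
      exact absurd hw (by simp [Sat])
  | srel a b iha ihb =>
    intro w hw
    simp only [eval] at hw ⊢
    by_cases ha : GFf a ∈ C
    · rw [if_pos ha] at hw
      rw [if_pos (h ha)]
      rcases hw with hall | ⟨k, h1, h2⟩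
      · exact Or.inl fun k => ihb _ (hall k)
      · exact Or.inr ⟨k, iha _ h1, fun j hj => ihb _ (h2 j hj)⟩
    · rw [if_neg ha] at hw
      exact absurd hw (by simp [Sat])

lemma eval_core (φ0 ψ0 : F Ap) (hsψ : ψ0 ∈ sf φ0)
    (C : Finset (F Ap)) (w : Word Ap) (N : ℕ)
    (H1 : ∀ χ, GFf χ ∈ C → ∀ k, ∃ j, k ≤ j ∧ Sat (suff w j) χ)
    (H2 : ∀ χ, GFf χ ∈ down φ0 ψ0 → GFf χ ∉ C → ∀ j, N ≤ j → ¬ Sat (suff w j) χ) :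
    ∀ χ, χ ∈ sf ψ0 → ∀ i, N ≤ i → (Sat (suff w i) χ ↔ Sat (suff w i) (eval C χ)) := by
  intro χ
  induction χ with
  | tt => intro _ i _; simp [Sat, eval]
  | ff => intro _ i _; simp [Sat, eval]
  | pos a => intro _ i _; simp [eval]
  | nlit a => intro _ i _; simp [eval]
  | and a b iha ihb =>
    intro hm i hi
    have ha : a ∈ sf ψ0 := sf_trans (by simp [sf, mem_sf_self]) hm
    have hb : b ∈ sf ψ0 := sf_trans (by simp [sf, mem_sf_self]) hm
    simp only [Sat, eval]
    exact and_congr (iha ha i hi) (ihb hb i hi)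
  | or a b iha ihb =>
    intro hm i hi
    have ha : a ∈ sf ψ0 := sf_trans (by simp [sf, mem_sf_self]) hm
    have hb : b ∈ sf ψ0 := sf_trans (by simp [sf, mem_sf_self]) hm
    simp only [Sat, eval]
    exact or_congr (iha ha i hi) (ihb hb i hi)
  | next a iha =>
    intro hm i hi
    have ha : a ∈ sf ψ0 := sf_trans (by simp [sf, mem_sf_self]) hm
    simp only [Sat, eval, suff_suff]
    exact iha ha (1 + i) (by omega)
  | untl a b iha ihb =>
    intro hm i hi
    have ha : a ∈ sf ψ0 := sf_trans (by simp [sf, mem_sf_self]) hm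
    have hb : b ∈ sf ψ0 := sf_trans (by simp [sf, mem_sf_self]) hm
    by_cases hc : GFf b ∈ C
    · simp only [eval, if_pos hc, Sat, suff_suff]
      constructor
      · rintro ⟨k, h2, h1⟩
        exact Or.inr ⟨k, (ihb hb (k + i) (by omega)).mp h2,
          fun j hj => (iha ha (j + i) (by omega)).mp (h1 j hj)⟩
      · rintro (hall | ⟨k, h2, h1⟩)
        · obtain ⟨j, hij, hsb⟩ := H1 b hc i
          refine ⟨j - i, ?_, fun m _ => (iha ha (m + i) (by omega)).mpr (hall m)⟩
          rwa [Nat.sub_add_cancel hij]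
        · exact ⟨k, (ihb hb (k + i) (by omega)).mpr h2,
            fun j hj => (iha ha (j + i) (by omega)).mpr (h1 j hj)⟩
    · simp only [eval, if_neg hc, Sat, suff_suff, iff_false]
      rintro ⟨k, h2, -⟩
      exact H2 b (GFf_mem_down_of_untl hsψ hm) hc (k + i) (by omega) h2
  | wuntl a b iha ihb =>
    intro hm i hi
    have ha : a ∈ sf ψ0 := sf_trans (by simp [sf, mem_sf_self]) hm
    have hb : b ∈ sf ψ0 := sf_trans (by simp [sf, mem_sf_self]) hm
    simp only [Sat, eval, suff_suff]
    exact or_congr (forall_congr' fun k => iha ha (k + i) (by omega))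
      (exists_congr fun k => and_congr (ihb hb (k + i) (by omega))
        (forall_congr' fun j => imp_congr_right fun _ => iha ha (j + i) (by omega)))
  | rel a b iha ihb =>
    intro hm i hi
    have ha : a ∈ sf ψ0 := sf_trans (by simp [sf, mem_sf_self]) hm
    have hb : b ∈ sf ψ0 := sf_trans (by simp [sf, mem_sf_self]) hm
    simp only [Sat, eval, suff_suff]
    exact or_congr (forall_congr' fun k => ihb hb (k + i) (by omega))
      (exists_congr fun k => and_congr (iha ha (k + i) (by omega))
        (forall_congr' fun j => imp_congr_right fun _ => ihb hb (j + i) (by omega)))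
  | srel a b iha ihb =>
    intro hm i hi
    have ha : a ∈ sf ψ0 := sf_trans (by simp [sf, mem_sf_self]) hm
    have hb : b ∈ sf ψ0 := sf_trans (by simp [sf, mem_sf_self]) hm
    by_cases hc : GFf a ∈ C
    · simp only [eval, if_pos hc, Sat, suff_suff]
      constructor
      · rintro ⟨k, h1, h2⟩
        exact Or.inr ⟨k, (iha ha (k + i) (by omega)).mp h1,
          fun j hj => (ihb hb (j + i) (by omega)).mp (h2 j hj)⟩
      · rintro (hall | ⟨k, h1, h2⟩)
        · obtain ⟨j, hij, hsa⟩ := H1 a hc i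
          refine ⟨j - i, ?_, fun m _ => (ihb hb (m + i) (by omega)).mpr (hall m)⟩
          rwa [Nat.sub_add_cancel hij]
        · exact ⟨k, (iha ha (k + i) (by omega)).mpr h1,
            fun j hj => (ihb hb (j + i) (by omega)).mpr (h2 j hj)⟩
    · simp only [eval, if_neg hc, Sat, suff_suff, iff_false]
      rintro ⟨k, h1, -⟩
      exact H2 a (GFf_mem_down_of_srel hsψ hm) hc (k + i) (by omega) h1

/-- properties of `FG(eval(ψ,C))` for a basis formula
`FG ψ ∈ B_FG(φ)`. -/
theorem eval_main_lemma {Ap : Type} [Fintype Ap] [DecidableEq Ap]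
    (φ ψ : F Ap) (hψ : FGf ψ ∈ BFG φ) :
    ∀ C ⊆ down φ ψ,
      (PiC Ap 1 (eval C ψ) ∧ DeltaC Ap 2 (FGf (eval C ψ))) ∧
      EquivUnder (down φ ψ) C (FGf ψ) (FGf (eval C ψ)) ∧
      (∀ C' : Finset (F Ap), C ⊆ C' → C' ⊆ down φ ψ →
        Entails (FGf (eval C ψ)) (FGf (eval C' ψ))) := by
  classical
  have hsψ : ψ ∈ sf φ := mem_sf_of_BFG hψ
  intro C hC
  refine ⟨⟨eval_pi1 C ψ, FGf_delta2 (eval_pi1 C ψ)⟩, ?_, ?_⟩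
  · intro w hw
    simp only [LangC, Set.mem_setOf_eq] at hw
    obtain ⟨hw1, hw2⟩ := hw
    have H1 : ∀ χ, GFf χ ∈ C → ∀ k, ∃ j, k ≤ j ∧ Sat (suff w j) χ := by
      intro χ hχ k
      exact (sat_GF w χ).mp (hw1 _ hχ) k
    set D := (down φ ψ).filter (fun e => e ∉ C) with hD
    have hne : ∀ e : F Ap, ∃ k, ∀ j, k ≤ j → ∀ χ, e = GFf χ → e ∈ D → ¬ Sat (suff w j) χ := by
      intro e
      by_cases hgf : ∃ χ, e = GFf χ
      · obtain ⟨χ, rfl⟩ := hgf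
        by_cases hd : GFf χ ∈ D
        · have hd' := Finset.mem_filter.mp hd
          have hns : ¬ Sat w (GFf χ) := hw2 _ hd'.1 hd'.2
          rw [sat_GF] at hns
          push_neg at hns
          obtain ⟨k, hk⟩ := hns
          refine ⟨k, fun j hj χ' heq _ => ?_⟩
          obtain rfl : χ = χ' := GFf_inj heq
          exact hk j hj
        · exact ⟨0, fun _ _ _ _ hmem => absurd hmem hd⟩
      · exact ⟨0, fun j _ χ heq _ => absurd ⟨χ, heq⟩ hgf⟩
    choose f hf using hne
    set N := D.sup f with hN
    have H2 : ∀ χ, GFf χ ∈ down φ ψ → GFf χ ∉ C → ∀ j, N ≤ j → ¬ Sat (suff w j) χ := by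
      intro χ hdm hcm j hj
      have hmem : GFf χ ∈ D := Finset.mem_filter.mpr ⟨hdm, hcm⟩
      exact hf (GFf χ) j (le_trans (Finset.le_sup hmem) hj) χ rfl hmem
    have key := eval_core φ ψ hsψ C w N H1 H2 ψ (mem_sf_self ψ)
    rw [sat_FG, sat_FG]
    constructor
    · rintro ⟨k, hk⟩
      exact ⟨max k N, fun j hj => (key j (le_trans (le_max_right k N) hj)).mp
        (hk j (le_trans (le_max_left k N) hj))⟩
    · rintro ⟨k, hk⟩
      exact ⟨max k N, fun j hj => (key j (le_trans (le_max_right k N) hj)).mpr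
        (hk j (le_trans (le_max_left k N) hj))⟩
  · intro C' hCC' _ w hw
    rw [sat_FG] at hw ⊢
    obtain ⟨k, hk⟩ := hw
    exact ⟨k, fun j hj => eval_mono hCC' ψ _ (hk j hj)⟩

end LTLNorm
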